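/- Every weak wheel (a cycle C on at least 3 vertices, a hub vertex w not on C, and internally disjoint paths from each vertex of C to w meeting only at w) contains no two vertex-disjoint odd cycles. -/

import Mathlib

open SimpleGraph

variable {V : Type*}

/-- A graph has a perfect matching. -/
def HasPM (G : SimpleGraph V) : Prop := ∃ M : G.Subgraph, M.IsPerfectMatching

/-- A set of vertices is independent (pairwise nonadjacent). -/
def IsIndep (G : SimpleGraph V) (s : Set V) : Prop := ∀ x ∈ s, ∀ y ∈ s, ¬ G.Adj x y

/-- The independence number. -/
noncomputable def alphaNum (G : SimpleGraph V) : ℕ :=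
  sSup {n | ∃ s : Set V, IsIndep G s ∧ s.ncard = n}

/-- The matching number. -/
noncomputable def matchNum (G : SimpleGraph V) : ℕ :=
  sSup {n | ∃ M : G.Subgraph, M.IsMatching ∧ M.edgeSet.ncard = n}

/-- A graph is König-Egerváry if α + ν = n. -/
def IsKE (G : SimpleGraph V) : Prop := alphaNum G + matchNum G = Nat.card V

/-- `G` is (the whole graph) an even subdivision of `K₄`: four corner vertices and six
internally disjoint odd paths joining each pair of corners, comprising all vertices
and edges of `G`. -/
def IsEvenSubdivK4 (G : SimpleGraph V) : Prop :=
  ∃ (c : Fin 4 → V) (P : ∀ i j : Fin 4, G.Walk (c i) (c j)),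
    Function.Injective c ∧
    (∀ i j : Fin 4, P j i = (P i j).reverse) ∧
    (∀ i j : Fin 4, i ≠ j → (P i j).IsPath ∧ Odd (P i j).length) ∧
    (∀ i j k l : Fin 4, i ≠ j → k ≠ l → ¬(i = k ∧ j = l) → ¬(i = l ∧ j = k) →
      ∀ x : V, x ∈ (P i j).support → x ∈ (P k l).support → x ∈ Set.range c) ∧
    (∀ x : V, ∃ i j : Fin 4, i ≠ j ∧ x ∈ (P i j).support) ∧
    (∀ e : Sym2 V, e ∈ G.edgeSet ↔ ∃ i j : Fin 4, i ≠ j ∧ e ∈ (P i j).edges)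

/-- `G` is (the whole graph) an even subdivision of `T`: two vertex-disjoint odd cycles
joined at blossom tips `v`, `w` by an odd path internally disjoint from the cycles,
comprising all vertices and edges of `G`. -/
def IsEvenSubdivT (G : SimpleGraph V) : Prop :=
  ∃ (v w : V) (C1 : G.Walk v v) (C2 : G.Walk w w) (P : G.Walk v w),
    C1.IsCycle ∧ C2.IsCycle ∧ Odd C1.length ∧ Odd C2.length ∧
    P.IsPath ∧ Odd P.length ∧
    (∀ x : V, x ∈ C1.support → x ∉ C2.support) ∧
    (∀ x : V, x ∈ P.support → x ∈ C1.support → x = v) ∧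
    (∀ x : V, x ∈ P.support → x ∈ C2.support → x = w) ∧
    (∀ x : V, x ∈ C1.support ∨ x ∈ C2.support ∨ x ∈ P.support) ∧
    (∀ e : Sym2 V, e ∈ G.edgeSet ↔ e ∈ C1.edges ∨ e ∈ C2.edges ∨ e ∈ P.edges)

/-- `G` contains a nice even subdivision of `T`: a subgraph `H` which is an even
subdivision of `T` and such that `G - V(H)` has a perfect matching. -/
def HasNiceEvenSubdivT (G : SimpleGraph V) : Prop :=
  ∃ H : G.Subgraph, IsEvenSubdivT H.coe ∧ HasPM (G.induce (H.vertsᶜ))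

/-- `G` has a spanning subgraph whose components are independent edges together with a
positive number of vertex-disjoint odd cycles. -/
def HasOddCycleCover (G : SimpleGraph V) : Prop :=
  ∃ (M : G.Subgraph) (k : ℕ) (u : Fin k → V) (C : ∀ i : Fin k, G.Walk (u i) (u i)),
    0 < k ∧ M.IsMatching ∧
    (∀ i, (C i).IsCycle ∧ Odd (C i).length) ∧
    (∀ i j, i ≠ j → ∀ x : V, x ∈ (C i).support → x ∉ (C j).support) ∧
    (∀ i, ∀ x ∈ (C i).support, x ∉ M.verts) ∧
    (∀ x : V, x ∈ M.verts ∨ ∃ i, x ∈ (C i).support)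

/-- A matchable graph is Egerváry iff it has no such spanning cover. -/
def IsEgervary (G : SimpleGraph V) : Prop := ¬ HasOddCycleCover G

/-- `G` contains two vertex-disjoint odd cycles. -/
def TwoDisjointOddCycles (G : SimpleGraph V) : Prop :=
  ∃ (a b : V) (C1 : G.Walk a a) (C2 : G.Walk b b),
    C1.IsCycle ∧ C2.IsCycle ∧ Odd C1.length ∧ Odd C2.length ∧
    ∀ x : V, x ∈ C1.support → x ∉ C2.support

/-- `G` is α-critical: deleting any edge increases the independence number. -/
def AlphaCritical (G : SimpleGraph V) : Prop :=
  ∀ e ∈ G.edgeSet, alphaNum (G.deleteEdges {e}) = alphaNum G + 1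

/-- The (open) neighborhood of a set of vertices. -/
def setN (G : SimpleGraph V) (I : Set V) : Set V := {x | x ∉ I ∧ ∃ y ∈ I, G.Adj x y}

/-- A weak wheel: a cycle `C`, a hub `w` not on `C`, and paths from each vertex of `C`
to `w`, pairwise meeting only at `w` and internally disjoint from `C`, comprising all
vertices and edges of `G`. -/
def IsWeakWheel {V : Type*} (G : SimpleGraph V) : Prop :=
  ∃ (v0 w : V) (C : G.Walk v0 v0) (P : ∀ x : V, x ∈ C.support → G.Walk x w),
    C.IsCycle ∧ w ∉ C.support ∧
    (∀ x hx, (P x hx).IsPath) ∧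
    (∀ x hx y hy, x ≠ y → ∀ z : V, z ∈ (P x hx).support → z ∈ (P y hy).support → z = w) ∧
    (∀ x hx, ∀ z : V, z ∈ (P x hx).support → z ∈ C.support → z = x) ∧
    (∀ z : V, z ∈ C.support ∨ ∃ x hx, z ∈ (P x hx).support) ∧
    (∀ e : Sym2 V, e ∈ G.edgeSet ↔ e ∈ C.edges ∨ ∃ x hx, e ∈ (P x hx).edges)



namespace WWAux

variable {V : Type*} {G : SimpleGraph V}

section Idx
variable [DecidableEq V]

/-- Index of the first occurrence of a vertex in a walk's support. -/
def wwIdx {b : V} : {a : V} → G.Walk a b → V → ℕ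
  | _, .nil, _ => 0
  | a, .cons _ q, z => if z = a then 0 else wwIdx q z + 1

@[simp] lemma wwIdx_start {a b : V} (p : G.Walk a b) : wwIdx p a = 0 := by
  cases p <;> simp [wwIdx]

lemma wwIdx_le_length {a b z : V} (p : G.Walk a b) (hz : z ∈ p.support) :
    wwIdx p z ≤ p.length := by
  induction p with
  | nil =>
    simp only [Walk.support_nil, List.mem_singleton] at hz
    subst hz; simp
  | @cons a c b h q ih =>
    rw [Walk.support_cons, List.mem_cons] at hz
    by_cases hza : z = a
    · simp [wwIdx, hza]
    · have hzq : z ∈ q.support := hz.resolve_left hza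
      simp only [wwIdx, if_neg hza, Walk.length_cons]
      exact Nat.succ_le_succ (ih hzq)

lemma wwIdx_eq_zero {a b z : V} (p : G.Walk a b) (hz : z ∈ p.support)
    (h0 : wwIdx p z = 0) : z = a := by
  induction p with
  | nil => simpa using hz
  | @cons a c b h q ih =>
    by_cases hza : z = a
    · exact hza
    · simp [wwIdx, if_neg hza] at h0

lemma wwIdx_last {a b : V} (p : G.Walk a b) (hnd : p.support.Nodup) :
    wwIdx p b = p.length := by
  induction p with
  | nil => simp [wwIdx]
  | @cons a c b h q ih =>
    rw [Walk.support_cons, List.nodup_cons] at hnd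
    have hba : b ≠ a := fun hh => hnd.1 (hh ▸ q.end_mem_support)
    simp only [wwIdx, if_neg hba, Walk.length_cons]
    exact congrArg (· + 1) (ih hnd.2)

lemma wwIdx_inj {a b z z' : V} (p : G.Walk a b) (hnd : p.support.Nodup)
    (hz : z ∈ p.support) (hz' : z' ∈ p.support)
    (h : wwIdx p z = wwIdx p z') : z = z' := by
  induction p with
  | nil =>
    simp only [Walk.support_nil, List.mem_singleton] at hz hz'
    rw [hz, hz']
  | @cons a c b h' q ih =>
    rw [Walk.support_cons, List.nodup_cons] at hnd
    rw [Walk.support_cons, List.mem_cons] at hz hz'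
    by_cases hza : z = a <;> by_cases hz'a : z' = a
    · rw [hza, hz'a]
    · rw [hza] at h ⊢
      simp [wwIdx, if_neg hz'a] at h
    · rw [hz'a] at h ⊢
      simp [wwIdx, if_neg hza] at h
    · have h1 : z ∈ q.support := hz.resolve_left hza
      have h2 : z' ∈ q.support := hz'.resolve_left hz'a
      simp only [wwIdx, if_neg hza, if_neg hz'a, Nat.add_right_cancel_iff] at h
      exact ih hnd.2 h1 h2 h

lemma wwIdx_edge {a b z : V} (p : G.Walk a b) (hnd : p.support.Nodup)
    {e : Sym2 V} (he : e ∈ p.edges) (hz : z ∈ e) :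
    ∃ z', e = s(z, z') ∧ z' ∈ p.support ∧
      (wwIdx p z' = wwIdx p z + 1 ∨ wwIdx p z = wwIdx p z' + 1) := by
  induction p with
  | nil => simp at he
  | @cons a c b h q ih =>
    rw [Walk.support_cons, List.nodup_cons] at hnd
    rw [Walk.edges_cons, List.mem_cons] at he
    have hca : c ≠ a := h.ne'
    have hidxc : wwIdx (Walk.cons h q) c = 1 := by
      simp [wwIdx, if_neg hca, wwIdx_start]
    rcases he with he | he
    · subst he
      rw [Sym2.mem_iff] at hz
      rcases hz with rfl | rfl
      · refine ⟨c, rfl, by simp, Or.inl ?_⟩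
        simp [hidxc]
      · refine ⟨a, Sym2.eq_swap, by simp, Or.inr ?_⟩
        simp [hidxc]
    · have hzq : z ∈ q.support := by
        induction e using Sym2.ind with
        | _ u v =>
          rw [Sym2.mem_iff] at hz
          rcases hz with rfl | rfl
          · exact q.fst_mem_support_of_mem_edges he
          · exact q.snd_mem_support_of_mem_edges he
      obtain ⟨z', hez, hz'q, hrel⟩ := ih hnd.2 he
      have hz'a : z' ≠ a := fun hh => hnd.1 (hh ▸ hz'q)
      have hza : z ≠ a := fun hh => hnd.1 (hh ▸ hzq)
      refine ⟨z', hez, by simp [hz'q], ?_⟩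
      simp only [wwIdx, if_neg hza, if_neg hz'a]
      omega

end Idx

lemma mem_support_of_edge {a b z : V} (p : G.Walk a b) {e : Sym2 V}
    (he : e ∈ p.edges) (hz : z ∈ e) : z ∈ p.support := by
  induction e using Sym2.ind with
  | _ u v =>
    rw [Sym2.mem_iff] at hz
    rcases hz with rfl | rfl
    · exact p.fst_mem_support_of_mem_edges he
    · exact p.snd_mem_support_of_mem_edges he

lemma exists_last_edge {a b : V} (p : G.Walk a b) (hp : 0 < p.length) :
    ∃ y, s(y, b) ∈ p.edges := by
  induction p with
  | nil => simp at hp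
  | @cons a c b h q ih =>
    by_cases hq : q.length = 0
    · have : c = b := Walk.eq_of_length_eq_zero hq
      subst this
      exact ⟨a, by simp⟩
    · obtain ⟨y, hy⟩ := ih (Nat.pos_of_ne_zero hq)
      exact ⟨y, by simp [hy]⟩

/-- In a cycle, every support vertex has two distinct incident edges. -/
lemma two_incident_edges {u z : V} {D : G.Walk u u} (hD : D.IsCycle)
    (hz : z ∈ D.support) :
    ∃ e f, e ∈ D.edges ∧ f ∈ D.edges ∧ e ≠ f ∧ z ∈ e ∧ z ∈ f := by
  classical
  have hperm := D.rotate_edges _ hz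
  have hD' := hD.rotate hz
  set D' := D.rotate _ hz with hD'def
  have hmem : ∀ e, e ∈ D'.edges → e ∈ D.edges := fun e hh => hperm.mem_iff.mp hh
  cases hcons : D' with
  | nil => rw [hcons] at hD'; exact absurd rfl hD'.ne_nil
  | @cons _ c _ h q =>
    rw [hcons] at hD'
    cases q with
    | nil => exact absurd rfl h.ne
    | @cons c' d _ h2 q2 =>
      have hq : 0 < (Walk.cons h2 q2).length := by simp
      obtain ⟨y, hy⟩ := exists_last_edge _ hq
      have hnd := hD'.edges_nodup
      rw [Walk.edges_cons, List.nodup_cons] at hnd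
      refine ⟨s(z, c), s(y, z), hmem _ ?_, hmem _ ?_, ?_, by simp, by simp⟩
      · rw [hcons, Walk.edges_cons]; exact List.mem_cons_self
      · rw [hcons, Walk.edges_cons]; exact List.mem_cons_of_mem _ hy
      · intro hEq
        exact hnd.1 (hEq ▸ hy)

/-- In a cycle, at most two edges contain a given vertex. -/
lemma le_two_incident {u z : V} {D : G.Walk u u} (hD : D.IsCycle)
    {e f g : Sym2 V} (he : e ∈ D.edges) (hf : f ∈ D.edges) (hg : g ∈ D.edges)
    (hef : e ≠ f) (heg : e ≠ g) (hfg : f ≠ g)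
    (hze : z ∈ e) (hzf : z ∈ f) (hzg : z ∈ g) : False := by
  classical
  have hzD : z ∈ D.support := mem_support_of_edge D he hze
  have hperm := D.rotate_edges _ hzD
  have hD' := hD.rotate hzD
  set D' := D.rotate _ hzD with hD'def
  have hmem : ∀ e', e' ∈ D.edges → e' ∈ D'.edges := fun e' hh => hperm.mem_iff.mpr hh
  cases hcons : D' with
  | nil => rw [hcons] at hD'; exact absurd rfl hD'.ne_nil
  | @cons _ c _ h q =>
    rw [hcons] at hD'
    have hqnd : q.support.Nodup := by
      have := hD'.support_nodup
      rwa [Walk.support_cons, List.tail_cons] at this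
    -- key: two distinct edges of q both containing z are equal
    have key : ∀ e' f', e' ∈ q.edges → f' ∈ q.edges → z ∈ e' → z ∈ f' → e' = f' := by
      intro e' f' he' hf' hze' hzf'
      obtain ⟨z1, hez1, hz1, hrel1⟩ := wwIdx_edge q hqnd he' hze'
      obtain ⟨z2, hfz2, hz2, hrel2⟩ := wwIdx_edge q hqnd hf' hzf'
      have hlast : wwIdx q z = q.length := wwIdx_last q hqnd
      have hle1 : wwIdx q z1 ≤ q.length := wwIdx_le_length q hz1
      have hle2 : wwIdx q z2 ≤ q.length := wwIdx_le_length q hz2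
      have h1 : wwIdx q z = wwIdx q z1 + 1 := by omega
      have h2 : wwIdx q z = wwIdx q z2 + 1 := by omega
      have : z1 = z2 := wwIdx_inj q hqnd hz1 hz2 (by omega)
      rw [hez1, hfz2, this]
    have hsplit : ∀ e', e' ∈ D.edges → e' = s(z, c) ∨ e' ∈ q.edges := by
      intro e' he'
      have := hmem e' he'
      rw [hcons, Walk.edges_cons, List.mem_cons] at this
      exact this
    rcases hsplit e he with h1 | h1 <;> rcases hsplit f hf with h2 | h2 <;>
      rcases hsplit g hg with h3 | h3
    · exact hef (h1.trans h2.symm)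
    · exact hef (h1.trans h2.symm)
    · exact heg (h1.trans h3.symm)
    · exact hfg (key f g h2 h3 hzf hzg)
    · exact hfg (h2.trans h3.symm)
    · exact heg (key e g h1 h3 hze hzg)
    · exact hef (key e f h1 h2 hze hzf)
    · exact hef (key e f h1 h2 hze hzf)

lemma end_mem_support_tail {u : V} (c : G.Walk u u) (hc : c ≠ SimpleGraph.Walk.nil) :
    u ∈ c.support.tail := by
  cases c with
  | nil => exact absurd rfl hc
  | cons h q =>
    simp only [Walk.support_cons, List.tail_cons]
    exact q.end_mem_support

lemma walk_prop (A : Set V) : ∀ {a b : V} (q : G.Walk a b),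
    (∀ u v : V, s(u, v) ∈ q.edges → u ∈ A → v ∈ A) → a ∈ A →
    ∀ z ∈ q.support, z ∈ A := by
  intro a b q
  induction q with
  | nil =>
    intro _ ha z hz
    simp only [Walk.support_nil, List.mem_singleton] at hz
    exact hz ▸ ha
  | @cons a c b h q ih =>
    intro hedge ha z hz
    rw [Walk.support_cons, List.mem_cons] at hz
    rcases hz with rfl | hz
    · exact ha
    · have hc : c ∈ A := hedge a c (by simp) ha
      exact ih (fun u v huv => hedge u v (by simp [huv])) hc z hz

end WWAux

namespace Main

lemma edge_repr {V : Type*} {G : SimpleGraph V} {e : Sym2 V} (he : e ∈ G.edgeSet) :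
    ∃ u v : V, e = s(u, v) ∧ G.Adj u v := by
  revert he
  refine Sym2.ind (fun u v he => ⟨u, v, rfl, ?_⟩) e
  exact G.mem_edgeSet.mp he

end Main

/-- A weak wheel contains no two vertex-disjoint odd cycles. -/
theorem weakWheel_no_twoDisjointOddCycles {V : Type*} (G : SimpleGraph V)
    (h : IsWeakWheel G) : ¬ TwoDisjointOddCycles G := by
  classical
  obtain ⟨v0, w, C, P, hC, hw, hPpath, hPP, hPC, hcov, hedges⟩ := h
  rintro ⟨a0, b0, C1, C2, h1, h2, -, -, hdisj0⟩
  have hv0 : v0 ∈ C.support := C.start_mem_support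
  have choose_eq : ∀ (z x : V) (hx : x ∈ C.support), z ∈ (P x hx).support → z ≠ w →
      ∀ (x' : V) (hx' : x' ∈ C.support), z ∈ (P x' hx').support → x' = x := by
    intro z x hx hz hzw x' hx' hz'
    by_contra hne
    exact hzw (hPP x' hx' x hx hne z hz' hz)
  -- Tool S : no cycle lies entirely within the spoke paths
  have toolS : ∀ (u : V) (D : G.Walk u u), D.IsCycle →
      (∀ e ∈ D.edges, ∃ x, ∃ hx : x ∈ C.support, e ∈ (P x hx).edges) → False := by
    intro u D hD hE
    set f : V → ℕ := fun z =>
      if h : ∃ x, ∃ hx : x ∈ C.support, z ∈ (P x hx).support then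
        WWAux.wwIdx (P h.choose h.choose_spec.choose).reverse z
      else 0 with hfdef
    have hfspec : ∀ (z x : V) (hx : x ∈ C.support), z ∈ (P x hx).support → z ≠ w →
        f z = WWAux.wwIdx (P x hx).reverse z := by
      intro z x hx hz hzw
      have hex : ∃ x, ∃ hx : x ∈ C.support, z ∈ (P x hx).support := ⟨x, hx, hz⟩
      have haux : ∀ (x'' : V) (hx'' : x'' ∈ C.support), z ∈ (P x'' hx'').support → x'' = x →
          WWAux.wwIdx (P x'' hx'').reverse z = WWAux.wwIdx (P x hx).reverse z := by
        rintro x'' hx'' hz'' rfl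
        rfl
      simp only [hfdef, dif_pos hex]
      exact haux _ _ hex.choose_spec.choose_spec
        (choose_eq z x hx hz hzw _ _ hex.choose_spec.choose_spec)
    have hfw : f w = 0 := by
      have hex : ∃ x, ∃ hx : x ∈ C.support, w ∈ (P x hx).support :=
        ⟨v0, hv0, (P v0 hv0).end_mem_support⟩
      simp only [hfdef, dif_pos hex]
      exact WWAux.wwIdx_start _
    have hf0 : ∀ (z x : V) (hx : x ∈ C.support), z ∈ (P x hx).support → f z = 0 → z = w := by
      intro z x hx hz h0
      by_contra hzw
      rw [hfspec z x hx hz hzw] at h0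
      exact hzw (WWAux.wwIdx_eq_zero _
        (by rw [Walk.support_reverse]; exact List.mem_reverse.2 hz) h0)
    obtain ⟨m, hm⟩ : ∃ m, D.support.argmax f = some m := by
      cases hh : D.support.argmax f with
      | none => exact absurd (List.argmax_eq_none.mp hh) D.support_ne_nil
      | some m => exact ⟨m, rfl⟩
    have hmmem : m ∈ D.support := List.argmax_mem (Option.mem_def.mpr hm)
    have hmax : ∀ z ∈ D.support, f z ≤ f m :=
      fun z hz => List.le_of_mem_argmax hz (Option.mem_def.mpr hm)
    by_cases h0 : f m = 0
    · cases hcons : D with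
      | nil => rw [hcons] at hD; exact hD.ne_nil rfl
      | @cons _ c _ hadj q =>
        have he0 : s(u, c) ∈ D.edges := by
          rw [hcons, Walk.edges_cons]; exact List.mem_cons_self
        obtain ⟨x, hx, hex⟩ := hE _ he0
        have hu : u ∈ (P x hx).support := (P x hx).fst_mem_support_of_mem_edges hex
        have hc : c ∈ (P x hx).support := (P x hx).snd_mem_support_of_mem_edges hex
        have huD : u ∈ D.support := D.start_mem_support
        have hcD : c ∈ D.support := WWAux.mem_support_of_edge D he0 (by simp)
        have hu0 : f u = 0 := Nat.le_zero.mp (h0 ▸ hmax u huD)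
        have hc0 : f c = 0 := Nat.le_zero.mp (h0 ▸ hmax c hcD)
        have huw : u = w := hf0 u x hx hu hu0
        have hcw : c = w := hf0 c x hx hc hc0
        exact hadj.ne (huw.trans hcw.symm)
    · have hmw : m ≠ w := fun hh => h0 (by rw [hh, hfw])
      obtain ⟨e, f', he, hf', hef, hme, hmf⟩ := WWAux.two_incident_edges hD hmmem
      obtain ⟨x, hx, hex⟩ := hE e he
      obtain ⟨y, hy, hfy⟩ := hE f' hf'
      have hmx : m ∈ (P x hx).support := WWAux.mem_support_of_edge _ hex hme
      have hmy : m ∈ (P y hy).support := WWAux.mem_support_of_edge _ hfy hmf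
      have hyx : y = x := choose_eq m x hx hmx hmw y hy hmy
      subst hyx
      set Q := (P y hx).reverse with hQdef
      have hQnd : Q.support.Nodup := ((hPpath y hx).reverse).support_nodup
      have heQ : e ∈ Q.edges := by
        rw [hQdef, Walk.edges_reverse]; exact List.mem_reverse.2 hex
      have hfQ : f' ∈ Q.edges := by
        rw [hQdef, Walk.edges_reverse]; exact List.mem_reverse.2 hfy
      obtain ⟨z1, he1, hz1Q, hrel1⟩ := WWAux.wwIdx_edge Q hQnd heQ hme
      obtain ⟨z2, hf2, hz2Q, hrel2⟩ := WWAux.wwIdx_edge Q hQnd hfQ hmf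
      have hz12 : z1 ≠ z2 := fun hh => hef (by rw [he1, hf2, hh])
      have hup : ∃ z', s(m, z') ∈ D.edges ∧ z' ∈ Q.support ∧
          WWAux.wwIdx Q z' = WWAux.wwIdx Q m + 1 := by
        rcases hrel1 with hr1 | hr1
        · exact ⟨z1, he1 ▸ he, hz1Q, hr1⟩
        · rcases hrel2 with hr2 | hr2
          · exact ⟨z2, hf2 ▸ hf', hz2Q, hr2⟩
          · exact absurd (WWAux.wwIdx_inj Q hQnd hz1Q hz2Q (by omega)) hz12
      obtain ⟨z', hz'D, hz'Q, hz'idx⟩ := hup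
      have hz'w : z' ≠ w := by
        intro hh
        rw [hh] at hz'idx
        have := WWAux.wwIdx_start Q
        omega
      have hz'supp : z' ∈ (P y hx).support := by
        rw [hQdef, Walk.support_reverse] at hz'Q
        exact List.mem_reverse.1 hz'Q
      have hz'D' : z' ∈ D.support := D.snd_mem_support_of_mem_edges hz'D
      have hh1 : f z' = WWAux.wwIdx Q z' := hfspec z' y hx hz'supp hz'w
      have hh2 : f m = WWAux.wwIdx Q m := hfspec m y hx hmx hmw
      have hh3 := hmax z' hz'D'
      omega
  -- Tool R : a cycle avoiding w has support inside C
  have toolR : ∀ (u : V) (D : G.Walk u u), D.IsCycle → w ∉ D.support →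
      ∀ z ∈ D.support, z ∈ C.support := by
    intro u D hD hwD
    set g : V → ℕ := fun z =>
      if z ∈ C.support then 0
      else if h : ∃ x, ∃ hx : x ∈ C.support, z ∈ (P x hx).support then
        WWAux.wwIdx (P h.choose h.choose_spec.choose) z
      else 0 with hgdef
    have hgspec : ∀ (z x : V) (hx : x ∈ C.support), z ∈ (P x hx).support → z ∉ C.support →
        z ≠ w → g z = WWAux.wwIdx (P x hx) z := by
      intro z x hx hz hzC hzw
      have hex : ∃ x, ∃ hx : x ∈ C.support, z ∈ (P x hx).support := ⟨x, hx, hz⟩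
      have haux : ∀ (x'' : V) (hx'' : x'' ∈ C.support), z ∈ (P x'' hx'').support → x'' = x →
          WWAux.wwIdx (P x'' hx'') z = WWAux.wwIdx (P x hx) z := by
        rintro x'' hx'' hz'' rfl
        rfl
      simp only [hgdef, if_neg hzC, dif_pos hex]
      exact haux _ _ hex.choose_spec.choose_spec
        (choose_eq z x hx hz hzw _ _ hex.choose_spec.choose_spec)
    have hg0 : ∀ z, z ≠ w → g z = 0 → z ∈ C.support := by
      intro z hzw h0
      by_cases hzC : z ∈ C.support
      · exact hzC
      · rcases (hcov z).resolve_left hzC with ⟨x, hx, hz⟩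
        rw [hgspec z x hx hz hzC hzw] at h0
        have hzx : z = x := WWAux.wwIdx_eq_zero _ hz h0
        rw [hzx]; exact hx
    obtain ⟨m, hm⟩ : ∃ m, D.support.argmax g = some m := by
      cases hh : D.support.argmax g with
      | none => exact absurd (List.argmax_eq_none.mp hh) D.support_ne_nil
      | some m => exact ⟨m, rfl⟩
    have hmmem : m ∈ D.support := List.argmax_mem (Option.mem_def.mpr hm)
    have hmax : ∀ z ∈ D.support, g z ≤ g m :=
      fun z hz => List.le_of_mem_argmax hz (Option.mem_def.mpr hm)
    by_cases h0 : g m = 0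
    · intro z hz
      have hzw : z ≠ w := fun hh => hwD (hh ▸ hz)
      exact hg0 z hzw (Nat.le_zero.mp (h0 ▸ hmax z hz))
    · exfalso
      have hmC : m ∉ C.support := fun hh => h0 (by simp only [hgdef, if_pos hh])
      have hmw : m ≠ w := fun hh => hwD (hh ▸ hmmem)
      obtain ⟨x, hx, hmx⟩ := (hcov m).resolve_left hmC
      obtain ⟨e, f', he, hf', hef, hme, hmf⟩ := WWAux.two_incident_edges hD hmmem
      have hclass : ∀ e', e' ∈ D.edges → m ∈ e' → e' ∈ (P x hx).edges := by
        intro e' he' hme'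
        have hG : e' ∈ G.edgeSet := D.edges_subset_edgeSet he'
        rcases (hedges e').mp hG with hce | ⟨x1, hx1, hsp⟩
        · exact absurd (WWAux.mem_support_of_edge C hce hme') hmC
        · have hmx1 : m ∈ (P x1 hx1).support := WWAux.mem_support_of_edge _ hsp hme'
          have hx1x : x1 = x := choose_eq m x hx hmx hmw x1 hx1 hmx1
          subst hx1x
          exact hsp
      have hex := hclass e he hme
      have hfx := hclass f' hf' hmf
      set pth := P x hx with hpthdef
      have hpnd : pth.support.Nodup := (hPpath x hx).support_nodup
      obtain ⟨z1, he1, hz1, hrel1⟩ := WWAux.wwIdx_edge pth hpnd hex hme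
      obtain ⟨z2, hf2, hz2, hrel2⟩ := WWAux.wwIdx_edge pth hpnd hfx hmf
      have hz12 : z1 ≠ z2 := fun hh => hef (by rw [he1, hf2, hh])
      have hup : ∃ z', s(m, z') ∈ D.edges ∧ z' ∈ pth.support ∧
          WWAux.wwIdx pth z' = WWAux.wwIdx pth m + 1 := by
        rcases hrel1 with hr1 | hr1
        · exact ⟨z1, he1 ▸ he, hz1, hr1⟩
        · rcases hrel2 with hr2 | hr2
          · exact ⟨z2, hf2 ▸ hf', hz2, hr2⟩
          · exact absurd (WWAux.wwIdx_inj pth hpnd hz1 hz2 (by omega)) hz12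
      obtain ⟨z', hz'D, hz'p, hz'idx⟩ := hup
      have hz'D' : z' ∈ D.support := D.snd_mem_support_of_mem_edges hz'D
      have hz'w : z' ≠ w := fun hh => hwD (hh ▸ hz'D')
      have hz'C : z' ∉ C.support := by
        intro hc
        have hzx : z' = x := hPC x hx z' hz'p hc
        rw [hzx] at hz'idx
        rw [show WWAux.wwIdx pth x = 0 from WWAux.wwIdx_start pth] at hz'idx
        omega
      have hh1 : g z' = WWAux.wwIdx pth z' := hgspec z' x hx hz'p hz'C hz'w
      have hh2 : g m = WWAux.wwIdx pth m := hgspec m x hx hmx hmC hmw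
      have hh3 := hmax z' hz'D'
      omega
  -- Claim B : every cycle meets C
  have claimB : ∀ (u : V) (D : G.Walk u u), D.IsCycle →
      ∃ z, z ∈ D.support ∧ z ∈ C.support := by
    intro u D hD
    by_contra hno
    push_neg at hno
    apply toolS u D hD
    intro e he
    have hG : e ∈ G.edgeSet := D.edges_subset_edgeSet he
    rcases (hedges e).mp hG with hce | hsp
    · exfalso
      have hzmem : e.out.1 ∈ e := Sym2.out_fst_mem e
      exact hno _ (WWAux.mem_support_of_edge D he hzmem)
        (WWAux.mem_support_of_edge C hce hzmem)
    · exact hsp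
  -- Main helper
  have helper : ∀ (a b : V) (D1 : G.Walk a a) (D2 : G.Walk b b), D1.IsCycle → D2.IsCycle →
      (∀ x, x ∈ D1.support → x ∉ D2.support) → w ∉ D1.support → False := by
    intro a b D1 D2 hD1 hD2 hdisj hwD1
    have hsub : ∀ z ∈ D1.support, z ∈ C.support := toolR a D1 hD1 hwD1
    have hedg1 : ∀ e ∈ D1.edges, e ∈ C.edges := by
      intro e he
      have hG : e ∈ G.edgeSet := D1.edges_subset_edgeSet he
      rcases (hedges e).mp hG with hce | ⟨x, hx, hsp⟩
      · exact hce
      · exfalso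
        obtain ⟨u', v', rfl, hadj⟩ := Main.edge_repr hG
        have hu1 : u' = x := hPC x hx u' ((P x hx).fst_mem_support_of_mem_edges hsp)
          (hsub u' (D1.fst_mem_support_of_mem_edges he))
        have hv1 : v' = x := hPC x hx v' ((P x hx).snd_mem_support_of_mem_edges hsp)
          (hsub v' (D1.snd_mem_support_of_mem_edges he))
        exact hadj.ne (hu1.trans hv1.symm)
    have hclo : ∀ u' v' : V, s(u', v') ∈ C.edges → u' ∈ D1.support → v' ∈ D1.support := by
      intro u' v' hg hu
      obtain ⟨e, f', he, hf', hef, hue, huf⟩ := WWAux.two_incident_edges hD1 hu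
      by_cases hge : s(u', v') = e
      · exact D1.snd_mem_support_of_mem_edges (hge ▸ he)
      · by_cases hgf : s(u', v') = f'
        · exact D1.snd_mem_support_of_mem_edges (hgf ▸ hf')
        · exact (WWAux.le_two_incident hC (hedg1 e he) (hedg1 f' hf') hg hef
            (fun hh => hge hh.symm) (fun hh => hgf hh.symm) hue huf (by simp)).elim
    have haD : a ∈ D1.support := D1.start_mem_support
    have haC : a ∈ C.support := hsub a haD
    have hCsub : ∀ z ∈ C.support, z ∈ D1.support := by
      intro z hzC
      set C' := C.rotate _ haC with hC'def
      have hperm := C.rotate_edges _ haC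
      have hprop := WWAux.walk_prop {t | t ∈ D1.support} C'
        (fun u' v' huv hu => hclo u' v' (hperm.mem_iff.mp huv) hu) haD
      have hztail : z ∈ C.support.tail := by
        rw [C.support_eq_cons] at hzC
        rcases List.mem_cons.mp hzC with rfl | hh
        · exact WWAux.end_mem_support_tail C hC.ne_nil
        · exact hh
      have hzC' : z ∈ C'.support := by
        have htail := C.support_rotate _ haC
        have hmem2 : z ∈ C'.support.tail := htail.mem_iff.mpr hztail
        rw [C'.support_eq_cons]
        exact List.mem_cons_of_mem _ hmem2
      exact hprop z hzC'
    obtain ⟨z2, hz2D, hz2C⟩ := claimB b D2 hD2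
    exact hdisj z2 (hCsub z2 hz2C) hz2D
  by_cases hw1 : w ∈ C1.support
  · exact helper b0 a0 C2 C1 h2 h1 (fun x hx2 hx1 => hdisj0 x hx1 hx2)
      (fun hw2 => hdisj0 w hw1 hw2)
  · exact helper a0 b0 C1 C2 h1 h2 hdisj0 hw1
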